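/- Consider Algorithm A₁ in the disturbance-free case: let N(0) take values in {1,…,Λ} with P(N(0)=l) = p_l/(1−p₀) and let {N(k)}_{k≥1} be i.i.d. on {0,1,…,Λ} with P(N(k)=l) = p_l, all independent of each other and of x(0). Define arrival times k₀ = 0 and k_{i+1} = min{k > k_i : N(k) > 0}, and gaps Δ_i = k_{i+1} − k_i. At each arrival time k_i, tentative controls are generated by the feedback κ along the nominal model: χ₀ = x(k_i), u_j = κ(χ_{j−1}), χ_j = f(χ_{j−1}, u_j, 0) for j = 1,…,N(k_i); the trajectory satisfies x(k_i + ℓ) = χ_ℓ for ℓ ∈ {0,1,…,min(N(k_i),Δ_i)}, and x(k+1) = f(x(k),0,0) for k_i + N(k_i) ≤ k < k_{i+1} when Δ_i > N(k_i). Define σ := (1/(1−p₀ρ))·(ρ·(1−p₀α) + ((α−ρ)/(1−p₀))·∑_{l=1}^{Λ} p_l·(p₀ρ)^l). If p₀·α + (1−p₀)·σ < 1, then the closed loop is stochastically stable: ∑_{k=0}^∞ E[φ₁(|x(k)|)] < ∞. -/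

import Mathlib

open MeasureTheory ProbabilityTheory Filter
open scoped ENNReal

section Stmt7Aux

open Finset


set_option maxHeartbeats 1000000 in
lemma stmt7_weights (Λ : ℕ) (p₀ ρ α : ℝ) (p : ℕ → ℝ)
    (hρ0 : 0 ≤ ρ) (hρ1 : ρ < 1) (hp₀0 : 0 ≤ p₀) (hp₀1 : p₀ < 1)
    (hα1 : 1 ≤ α) (hαp : p₀ * α < 1)
    (hpnonneg : ∀ l ∈ Finset.Icc 1 Λ, 0 ≤ p l)
    (hpsum : p₀ + ∑ l ∈ Finset.Icc 1 Λ, p l = 1)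
    (hstab : p₀ * α + (1 - p₀) * ((1 / (1 - p₀ * ρ)) *
        (ρ * (1 - p₀ * α) + ((α - ρ) / (1 - p₀)) * ∑ l ∈ Finset.Icc 1 Λ, p l * (p₀ * ρ) ^ l))
      < 1) :
    ∃ (W : ℕ → ℝ) (β ε : ℝ), 0 < ε ∧ 0 ≤ β ∧ β < 1 ∧
      (∀ b, ε ≤ W b) ∧ (∀ b, W b ≤ 1 + ε) ∧
      (α * (p₀ * W 0 + ∑ l ∈ Finset.Icc 1 Λ, p l * W l) ≤ β * W 0) ∧
      (∀ c : ℕ, ρ * (p₀ * W c + ∑ l ∈ Finset.Icc 1 Λ, p l * W l) ≤ β * W (c + 1)) := by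
  have hαpos : (0:ℝ) < α := lt_of_lt_of_le one_pos hα1
  obtain ⟨T, hT_def⟩ : ∃ T : ℝ, T = ∑ l ∈ Finset.Icc 1 Λ, p l * (p₀ * ρ) ^ l := ⟨_, rfl⟩
  rw [← hT_def] at hstab
  have hT0 : 0 ≤ T := hT_def ▸ (Finset.sum_nonneg fun l hl =>
    mul_nonneg (hpnonneg l hl) (pow_nonneg (mul_nonneg hp₀0 hρ0) l))
  obtain ⟨Den, hDen_def⟩ : ∃ D : ℝ, D = 1 - ρ + ρ * T := ⟨_, rfl⟩
  have hDenpos : 0 < Den := by rw [hDen_def]; nlinarith [mul_nonneg hρ0 hT0]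
  obtain ⟨wst, hwst_def⟩ : ∃ w' : ℝ, w' = ρ * T / Den := ⟨_, rfl⟩
  have hwstDen : wst * Den = ρ * T := by
    rw [hwst_def]; field_simp
  have hwst0 : 0 ≤ wst := by
    rw [hwst_def]; exact div_nonneg (mul_nonneg hρ0 hT0) hDenpos.le
  have hwst1 : wst < 1 := by
    rw [hwst_def, div_lt_one hDenpos, hDen_def]; linarith
  obtain ⟨w, hw_def⟩ : ∃ w : ℕ → ℝ, w = fun b => wst + (1 - wst) * (p₀ * ρ) ^ b := ⟨_, rfl⟩
  have hw_app : ∀ b, w b = wst + (1 - wst) * (p₀ * ρ) ^ b := fun b => by rw [hw_def]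
  have ht0 : (0:ℝ) ≤ p₀ * ρ := mul_nonneg hp₀0 hρ0
  have ht1 : p₀ * ρ < 1 := by nlinarith
  have hw0 : ∀ b, 0 ≤ w b := by
    intro b
    have h1 : 0 ≤ (p₀ * ρ) ^ b := pow_nonneg ht0 b
    have h2 : (0:ℝ) ≤ (1 - wst) * (p₀ * ρ) ^ b := mul_nonneg (by linarith) h1
    rw [hw_app]; linarith
  have hw1 : ∀ b, w b ≤ 1 := by
    intro b
    have h1 : (p₀ * ρ) ^ b ≤ 1 := pow_le_one₀ ht0 ht1.le
    have h2 : (1 - wst) * (p₀ * ρ) ^ b ≤ (1 - wst) * 1 :=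
      mul_le_mul_of_nonneg_left h1 (by linarith)
    rw [hw_app]; linarith
  have hwzero : w 0 = 1 := by rw [hw_app]; ring
  obtain ⟨S, hS_def⟩ : ∃ S : ℝ, S = ∑ l ∈ Finset.Icc 1 Λ, p l * w l := ⟨_, rfl⟩
  have hpsum' : ∑ l ∈ Finset.Icc 1 Λ, p l = 1 - p₀ := by linarith
  have hS : S = wst * (1 - p₀) + (1 - wst) * T := by
    rw [hS_def, hT_def, ← hpsum', Finset.mul_sum, Finset.mul_sum, ← Finset.sum_add_distrib]
    apply Finset.sum_congr rfl
    intro l hl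
    rw [hw_app]; ring
  have hS0 : 0 ≤ S := hS_def ▸ (Finset.sum_nonneg fun l hl =>
    mul_nonneg (hpnonneg l hl) (hw0 l))
  have hSDen : S * Den = T * (1 - ρ * p₀) := by
    rw [hS, hDen_def]
    rw [hDen_def] at hwstDen
    linear_combination ((1 - p₀) - T) * hwstDen
  have hρS : ρ * S = (1 - ρ * p₀) * wst := by
    have h2 : (ρ * S) * Den = ((1 - ρ * p₀) * wst) * Den := by
      rw [mul_assoc, hSDen]
      linear_combination (1 - ρ * p₀) * hwstDen.symm
    exact mul_right_cancel₀ (ne_of_gt hDenpos) h2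
  -- key stability inequality
  have hA : (0:ℝ) < 1 - p₀ * ρ := by nlinarith
  have hB : (0:ℝ) < 1 - p₀ := by linarith
  have hkey : (α - ρ) * T < (1 - α * p₀) * (1 - ρ) := by
    have e : (1 - p₀) * ((1 / (1 - p₀ * ρ)) *
        (ρ * (1 - p₀ * α) + ((α - ρ) / (1 - p₀)) * T))
        = ((1 - p₀) * ρ * (1 - p₀ * α) + (α - ρ) * T) / (1 - p₀ * ρ) := by
      field_simp
    rw [e] at hstab
    have h2 : (1 - p₀) * ρ * (1 - p₀ * α) + (α - ρ) * T
        < (1 - p₀ * α) * (1 - p₀ * ρ) := by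
      have h3 : ((1 - p₀) * ρ * (1 - p₀ * α) + (α - ρ) * T) / (1 - p₀ * ρ)
          < 1 - p₀ * α := by linarith
      calc (1 - p₀) * ρ * (1 - p₀ * α) + (α - ρ) * T
          = (((1 - p₀) * ρ * (1 - p₀ * α) + (α - ρ) * T) / (1 - p₀ * ρ)) * (1 - p₀ * ρ) := by
            field_simp
        _ < (1 - p₀ * α) * (1 - p₀ * ρ) := by
            exact mul_lt_mul_of_pos_right h3 hA
    have hid : (1 - p₀ * α) * (1 - p₀ * ρ) - (1 - p₀) * ρ * (1 - p₀ * α)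
        = (1 - α * p₀) * (1 - ρ) := by ring
    linarith
  have hii : α * S < 1 - α * p₀ := by
    have h1 : α * S * Den < (1 - α * p₀) * Den := by
      have h2 : α * S * Den = α * (T * (1 - ρ * p₀)) := by
        rw [mul_assoc, hSDen]
      have hid : (1 - α * p₀) * Den - α * (T * (1 - ρ * p₀))
          = (1 - α * p₀) * (1 - ρ) - (α - ρ) * T := by
        rw [hDen_def]; ring
      linarith
    exact lt_of_mul_lt_mul_right (by linarith) hDenpos.le
  -- the margin, the perturbation, and the contraction factor
  obtain ⟨m, hm_def⟩ : ∃ m : ℝ, m = 1 - α * (p₀ + S) := ⟨_, rfl⟩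
  have hmpos : 0 < m := by rw [hm_def]; nlinarith
  obtain ⟨ε, hε_def⟩ : ∃ ε : ℝ, ε = m / (2 * α) := ⟨_, rfl⟩
  have hεpos : 0 < ε := by rw [hε_def]; exact div_pos hmpos (by linarith)
  obtain ⟨W, hW_def⟩ : ∃ W : ℕ → ℝ, W = fun b => w b + ε := ⟨_, rfl⟩
  have hW_app : ∀ b, W b = w b + ε := fun b => by rw [hW_def]
  obtain ⟨β, hβ_def⟩ : ∃ β : ℝ,
      β = max (1 - (1 - ρ) * ε / (1 + ε)) ((1 - m / 2) / (1 + ε)) := ⟨_, rfl⟩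
  have h1ε : (0:ℝ) < 1 + ε := by linarith
  have hβ0 : 0 ≤ β := by
    have h2 : (1 - ρ) * ε / (1 + ε) ≤ 1 := by
      rw [div_le_one h1ε]; nlinarith
    have h3 : (0:ℝ) ≤ 1 - (1 - ρ) * ε / (1 + ε) := by linarith
    rw [hβ_def]
    exact le_trans h3 (le_max_left _ _)
  have hβ1 : β < 1 := by
    rw [hβ_def]
    apply max_lt
    · have : 0 < (1 - ρ) * ε / (1 + ε) := div_pos (mul_pos (by linarith) hεpos) h1ε
      linarith
    · rw [div_lt_one h1ε]; linarith
  have hβ_ge1 : 1 - (1 - ρ) * ε / (1 + ε) ≤ β := by rw [hβ_def]; exact le_max_left _ _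
  have hβ_ge2 : (1 - m / 2) / (1 + ε) ≤ β := by rw [hβ_def]; exact le_max_right _ _
  have hWlo : ∀ b, ε ≤ W b := fun b => by rw [hW_app]; linarith [hw0 b]
  have hWhi : ∀ b, W b ≤ 1 + ε := fun b => by rw [hW_app]; linarith [hw1 b]
  have hSW : ∑ l ∈ Finset.Icc 1 Λ, p l * W l = S + (1 - p₀) * ε := by
    rw [hS_def, ← hpsum', Finset.sum_mul, ← Finset.sum_add_distrib]
    apply Finset.sum_congr rfl
    intro l hl
    rw [hW_app]; ring
  refine ⟨W, β, ε, hεpos, hβ0, hβ1, hWlo, hWhi, ?_, ?_⟩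
  · -- K0
    rw [hSW, hW_app, hwzero]
    have hε' : α * ε = m / 2 := by rw [hε_def]; field_simp
    have hLHS : α * (p₀ * (1 + ε) + (S + (1 - p₀) * ε)) = 1 - m + α * ε := by
      rw [hm_def]; ring
    rw [hLHS, hε']
    have h2 : (1 - m / 2) ≤ β * (1 + ε) := by
      calc (1 - m / 2) = ((1 - m / 2) / (1 + ε)) * (1 + ε) := by field_simp
        _ ≤ β * (1 + ε) := mul_le_mul_of_nonneg_right hβ_ge2 h1ε.le
    linarith
  · -- K1
    intro c
    rw [hSW, hW_app, hW_app]
    have hrec : ρ * (p₀ * w c + S) = w (c + 1) := by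
      rw [hw_app, hw_app, pow_succ]
      linear_combination hρS
    have hLHS : ρ * (p₀ * (w c + ε) + (S + (1 - p₀) * ε)) = w (c + 1) + ρ * ε := by
      rw [← hrec]; ring
    rw [hLHS]
    have hd : (1 - ρ) * ε / (1 + ε) * (1 + ε) = (1 - ρ) * ε := by field_simp
    have h1 : (1 - β) * (w (c + 1) + ε) ≤ (1 - ρ) * ε := by
      have h2 : 0 ≤ w (c + 1) + ε := by linarith [hw0 (c + 1)]
      have h3 : w (c + 1) + ε ≤ 1 + ε := by linarith [hw1 (c + 1)]
      have h4 : 1 - β ≤ (1 - ρ) * ε / (1 + ε) := by linarith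
      calc (1 - β) * (w (c + 1) + ε) ≤ ((1 - ρ) * ε / (1 + ε)) * (1 + ε) := by
            apply mul_le_mul h4 h3 h2 (le_of_lt (div_pos (mul_pos (by linarith) hεpos) h1ε))
        _ = (1 - ρ) * ε := hd
    nlinarith [hw0 (c + 1)]


lemma stmt7_iIndep {Ω E : Type*} [MeasurableSpace Ω] [mE : MeasurableSpace E]
    (μ : Measure Ω) [IsProbabilityMeasure μ]
    (N : ℕ → Ω → ℕ) (hNmeas : ∀ k, Measurable (N k))
    (hNiid : iIndepFun N μ)
    (x0 : Ω → E) (hx0meas : Measurable x0)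
    (hx0indep : IndepFun x0 (fun ω k => N k ω) μ) :
    iIndep (fun o : Option ℕ => Option.elim o (MeasurableSpace.comap x0 mE)
      (fun i => MeasurableSpace.comap (N i) inferInstance)) μ := by
  classical
  rw [iIndep_iff]
  intro s F hF
  -- reindex via u
  have key : ∀ (s' : Finset (Option ℕ)), none ∉ s' → (∀ i ∈ s', MeasurableSet[
      Option.elim i (MeasurableSpace.comap x0 mE)
        (fun i => MeasurableSpace.comap (N i) inferInstance)] (F i)) →
      (μ (⋂ i ∈ s', F i) = ∏ i ∈ s', μ (F i)) ∧
      MeasurableSet[MeasurableSpace.comap (fun ω k => N k ω) inferInstance] (⋂ i ∈ s', F i) := by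
    intro s' hnone hF'
    -- u : Finset ℕ with image
    set u : Finset ℕ := s'.preimage some (Set.injOn_of_injective (Option.some_injective ℕ)) with hu
    have himg : s' = u.image some := by
      ext o
      cases o with
      | none => simp [hnone, hu]
      | some j => simp [hu, Finset.mem_preimage]
    have hinter : (⋂ i ∈ s', F i) = ⋂ j ∈ u, F (some j) := by
      rw [himg]
      rw [Finset.set_biInter_finset_image]
    have hprod : (∏ i ∈ s', μ (F i)) = ∏ j ∈ u, μ (F (some j)) := by
      rw [himg, Finset.prod_image]
      intro a ha b hb hab
      exact Option.some_injective ℕ hab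
    constructor
    · rw [hinter, hprod]
      exact hNiid.meas_biInter (fun j hj => hF' (some j) (by rw [himg]; exact Finset.mem_image_of_mem some hj))
    · rw [hinter]
      -- each F (some j) is in comap (N j) ≤ comap process
      have hsub : ∀ j ∈ u, MeasurableSet[MeasurableSpace.comap (fun ω k => N k ω)
          inferInstance] (F (some j)) := by
        intro j hj
        have h1 := hF' (some j) (by rw [himg]; exact Finset.mem_image_of_mem some hj)
        obtain ⟨B, hB, hBeq⟩ := h1
        refine ⟨(fun g : ℕ → ℕ => g j) ⁻¹' B, (measurable_pi_apply j) hB, ?_⟩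
        exact hBeq
      exact MeasurableSet.biInter u.countable_toSet hsub
  by_cases hn : none ∈ s
  · have hs : s = insert none (s.erase none) := by
      rw [Finset.insert_erase hn]
    have hnone' : none ∉ s.erase none := Finset.notMem_erase _ _
    obtain ⟨hprod', hmeas'⟩ := key (s.erase none) hnone'
      (fun i hi => hF i (Finset.mem_of_mem_erase hi))
    rw [hs, Finset.set_biInter_insert, Finset.prod_insert hnone']
    rw [← hprod']
    obtain ⟨A, hA, hAeq⟩ := hF none hn
    exact hx0indep.meas_inter ⟨A, hA, hAeq⟩ hmeas'
  · exact (key s hn hF).1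

lemma stmt7_indep_sup {Ω E : Type*} [mΩ : MeasurableSpace Ω] [mE : MeasurableSpace E]
    (μ : Measure Ω) [IsProbabilityMeasure μ]
    (N : ℕ → Ω → ℕ) (hNmeas : ∀ k, Measurable (N k))
    (hNiid : iIndepFun N μ)
    (x0 : Ω → E) (hx0meas : Measurable x0)
    (hx0indep : IndepFun x0 (fun ω k => N k ω) μ) (k : ℕ) :
    Indep (MeasurableSpace.comap x0 mE ⊔ ⨆ i ∈ Set.Iic k, MeasurableSpace.comap (N i) inferInstance)
      (MeasurableSpace.comap (N (k + 1)) inferInstance) μ := by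
  have hii := stmt7_iIndep μ N hNmeas hNiid x0 hx0meas hx0indep
  have h_le : ∀ o : Option ℕ, (Option.elim o (MeasurableSpace.comap x0 mE)
      (fun i => MeasurableSpace.comap (N i) inferInstance)) ≤ mΩ := by
    intro o
    cases o with
    | none => exact hx0meas.comap_le
    | some i => exact (hNmeas i).comap_le
  have h := indep_iSup_of_disjoint h_le hii
    (S := insert none (some '' Set.Iic k)) (T := {some (k + 1)})
    (by
      simp only [Set.disjoint_singleton_right, Set.mem_insert_iff, Set.mem_image]
      push_neg
      refine ⟨by simp, ?_⟩
      intro i hi h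
      injection h with h'
      rw [Set.mem_Iic] at hi
      omega)
  have e1 : (⨆ o ∈ insert none (some '' Set.Iic k), Option.elim o (MeasurableSpace.comap x0 mE)
      (fun i => MeasurableSpace.comap (N i) inferInstance))
      = MeasurableSpace.comap x0 mE ⊔ ⨆ i ∈ Set.Iic k, MeasurableSpace.comap (N i) inferInstance := by
    rw [_root_.iSup_insert, _root_.iSup_image]
    rfl
  have e2 : (⨆ o ∈ ({some (k + 1)} : Set (Option ℕ)), Option.elim o (MeasurableSpace.comap x0 mE)
      (fun i => MeasurableSpace.comap (N i) inferInstance))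
      = MeasurableSpace.comap (N (k + 1)) inferInstance := by
    rw [_root_.iSup_singleton]
    rfl
  rw [e1, e2] at h
  exact h


/-- Budget process: number of remaining precomputed controls. -/
def stmt7B {Ω : Type*} (N : ℕ → Ω → ℕ) : ℕ → Ω → ℕ
  | 0 => N 0
  | (k+1) => fun ω => if 0 < N (k+1) ω then N (k+1) ω else stmt7B N k ω - 1

/-- Measurable version of the closed-loop trajectory. -/
def stmt7X {Ω E : Type*} (gcl gol : E → E) (x0 : Ω → E) (B : ℕ → Ω → ℕ) : ℕ → Ω → E
  | 0 => x0
  | (k+1) => fun ω => if 0 < B k ω then gcl (stmt7X gcl gol x0 B k ω)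
      else gol (stmt7X gcl gol x0 B k ω)

lemma stmt7_measB {Ω E : Type*} [mΩ : MeasurableSpace Ω] [mE : MeasurableSpace E]
    (N : ℕ → Ω → ℕ) (x0 : Ω → E) (k : ℕ) :
    Measurable[MeasurableSpace.comap x0 mE ⊔
      ⨆ i ∈ Set.Iic k, MeasurableSpace.comap (N i) inferInstance] (stmt7B N k) := by
  induction k with
  | zero =>
      exact Measurable.of_comap_le (le_trans (le_biSup (fun i => MeasurableSpace.comap (N i) inferInstance) (Set.mem_Iic.2 le_rfl)) le_sup_right)
  | succ k ih =>
      have hmono : (MeasurableSpace.comap x0 mE ⊔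
          ⨆ i ∈ Set.Iic k, MeasurableSpace.comap (N i) inferInstance) ≤
          (MeasurableSpace.comap x0 mE ⊔
          ⨆ i ∈ Set.Iic (k+1), MeasurableSpace.comap (N i) inferInstance) := by
        apply sup_le_sup_left
        apply biSup_mono
        intro i hi
        simp only [Set.mem_Iic] at hi ⊢
        omega
      have hNk1 : Measurable[MeasurableSpace.comap x0 mE ⊔
          ⨆ i ∈ Set.Iic (k+1), MeasurableSpace.comap (N i) inferInstance] (N (k+1)) :=
        Measurable.of_comap_le (le_trans (le_biSup (fun i => MeasurableSpace.comap (N i) inferInstance) (Set.mem_Iic.2 le_rfl)) le_sup_right)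
      show Measurable[MeasurableSpace.comap x0 mE ⊔
          ⨆ i ∈ Set.Iic (k+1), MeasurableSpace.comap (N i) inferInstance]
        fun ω => if 0 < N (k+1) ω then N (k+1) ω else stmt7B N k ω - 1
      apply Measurable.ite
      · exact hNk1 ((Set.to_countable _).measurableSet)
      · exact hNk1
      · exact (measurable_from_top (f := fun b : ℕ => b - 1)).comp (ih.mono hmono le_rfl)

lemma stmt7_measX {Ω E : Type*} [mΩ : MeasurableSpace Ω] [mE : MeasurableSpace E]
    (N : ℕ → Ω → ℕ) (x0 : Ω → E) (gcl gol : E → E)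
    (hgcl : Measurable gcl) (hgol : Measurable gol) (k : ℕ) :
    Measurable[MeasurableSpace.comap x0 mE ⊔
      ⨆ i ∈ Set.Iic k, MeasurableSpace.comap (N i) inferInstance]
      (stmt7X gcl gol x0 (stmt7B N) k) ∧
    Measurable[MeasurableSpace.comap x0 mE ⊔
      ⨆ i ∈ Set.Iic k, MeasurableSpace.comap (N i) inferInstance]
      (stmt7X gcl gol x0 (stmt7B N) (k+1)) := by
  induction k with
  | zero =>
      constructor
      · exact Measurable.of_comap_le le_sup_left
      · show Measurable[MeasurableSpace.comap x0 mE ⊔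
            ⨆ i ∈ Set.Iic 0, MeasurableSpace.comap (N i) inferInstance]
          fun ω => if 0 < stmt7B N 0 ω then gcl (x0 ω) else gol (x0 ω)
        have hx : Measurable[MeasurableSpace.comap x0 mE ⊔
            ⨆ i ∈ Set.Iic 0, MeasurableSpace.comap (N i) inferInstance] x0 :=
          Measurable.of_comap_le le_sup_left
        exact Measurable.ite (stmt7_measB N x0 0 ((Set.to_countable _).measurableSet))
          (hgcl.comp hx) (hgol.comp hx)
  | succ k ih =>
      have hmono : (MeasurableSpace.comap x0 mE ⊔
          ⨆ i ∈ Set.Iic k, MeasurableSpace.comap (N i) inferInstance) ≤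
          (MeasurableSpace.comap x0 mE ⊔
          ⨆ i ∈ Set.Iic (k+1), MeasurableSpace.comap (N i) inferInstance) := by
        apply sup_le_sup_left
        apply biSup_mono
        intro i hi
        simp only [Set.mem_Iic] at hi ⊢
        omega
      have h1 := ih.2.mono hmono le_rfl
      refine ⟨h1, ?_⟩
      show Measurable[MeasurableSpace.comap x0 mE ⊔
          ⨆ i ∈ Set.Iic (k+1), MeasurableSpace.comap (N i) inferInstance]
        fun ω => if 0 < stmt7B N (k+1) ω
          then gcl (stmt7X gcl gol x0 (stmt7B N) (k+1) ω)
          else gol (stmt7X gcl gol x0 (stmt7B N) (k+1) ω)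
      exact Measurable.ite (stmt7_measB N x0 (k+1) ((Set.to_countable _).measurableSet))
        (hgcl.comp h1) (hgol.comp h1)


end Stmt7Aux

/-- Stochastic stability of Algorithm A₁ with i.i.d. availability (Theorem 2).
Tentative controls are generated by the feedback `κ` along the nominal model at each arrival
time `k_i` (times with `N(k_i) ≥ 1`), are applied for `min(N(k_i), Δ_i)` steps, and the plant
runs open loop on the remaining steps of each inter-arrival interval. If
`p₀α + (1−p₀)σ < 1`, where
`σ = (1/(1−p₀ρ))(ρ(1−p₀α) + ((α−ρ)/(1−p₀)) ∑_{l=1}^{Λ} p_l (p₀ρ)^l)`,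
then `∑_{k=0}^∞ E[φ₁(|x(k)|)] < ∞`. -/
theorem stmt_7
    {n p' m : ℕ}
    (f : EuclideanSpace ℝ (Fin n) → EuclideanSpace ℝ (Fin p') → EuclideanSpace ℝ (Fin m) →
      EuclideanSpace ℝ (Fin n))
    (hfmeas : Measurable fun q : EuclideanSpace ℝ (Fin n) × EuclideanSpace ℝ (Fin p') ×
      EuclideanSpace ℝ (Fin m) => f q.1 q.2.1 q.2.2)
    (hf0 : f 0 0 0 = 0)
    (V : EuclideanSpace ℝ (Fin n) → ℝ) (hVmeas : Measurable V) (hVnonneg : ∀ x, 0 ≤ V x)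
    (κ : EuclideanSpace ℝ (Fin n) → EuclideanSpace ℝ (Fin p')) (hκmeas : Measurable κ)
    -- Assumption 1: class-K∞ bounds and closed-loop contraction
    (φ₁ φ₂ : ℝ → ℝ)
    (hφ₁K : Continuous φ₁ ∧ φ₁ 0 = 0 ∧ StrictMonoOn φ₁ (Set.Ici 0) ∧ Tendsto φ₁ atTop atTop)
    (hφ₂K : Continuous φ₂ ∧ φ₂ 0 = 0 ∧ StrictMonoOn φ₂ (Set.Ici 0) ∧ Tendsto φ₂ atTop atTop)
    (ρ : ℝ) (hρ0 : 0 ≤ ρ) (hρ1 : ρ < 1)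
    (hsandwich : ∀ x, φ₁ ‖x‖ ≤ V x ∧ V x ≤ φ₂ ‖x‖)
    (hcontract : ∀ x, V (f x (κ x) 0) ≤ ρ * V x)
    -- Assumption 2: distribution of the number of computed controls
    (Λ : ℕ) (p₀ : ℝ) (p : ℕ → ℝ)
    (hp₀0 : 0 ≤ p₀) (hp₀1 : p₀ < 1)
    (hpnonneg : ∀ l ∈ Finset.Icc 1 Λ, 0 ≤ p l)
    (hpsum : p₀ + ∑ l ∈ Finset.Icc 1 Λ, p l = 1)
    -- Assumption 3: open-loop growth bound with α ∈ [1, 1/p₀)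
    (α : ℝ) (hα1 : 1 ≤ α) (hαp : p₀ * α < 1)
    (hgrow : ∀ x, V (f x 0 0) ≤ α * V x)
    -- probability space and the sequence-length process N
    {Ω : Type*} [MeasurableSpace Ω] (μ : Measure Ω) [IsProbabilityMeasure μ]
    (N : ℕ → Ω → ℕ) (hNmeas : ∀ k, Measurable (N k))
    (hN0val : ∀ ω, 1 ≤ N 0 ω ∧ N 0 ω ≤ Λ)
    (hN0dist : ∀ l ∈ Finset.Icc 1 Λ, μ {ω | N 0 ω = l} = ENNReal.ofReal (p l / (1 - p₀)))
    (hNval : ∀ k ω, 1 ≤ k → N k ω ≤ Λ)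
    (hNdist0 : ∀ k, 1 ≤ k → μ {ω | N k ω = 0} = ENNReal.ofReal p₀)
    (hNdist : ∀ k, 1 ≤ k → ∀ l ∈ Finset.Icc 1 Λ, μ {ω | N k ω = l} = ENNReal.ofReal (p l))
    (hNiid : iIndepFun N μ)
    -- initial state, independent of the N process
    (x0 : Ω → EuclideanSpace ℝ (Fin n)) (hx0meas : Measurable x0)
    (hx0indep : IndepFun x0 (fun ω k => N k ω) μ)
    (hx0int : ∫⁻ ω, ENNReal.ofReal (φ₂ ‖x0 ω‖) ∂μ < ⊤)
    -- arrival times k_i and the closed-loop trajectory of Algorithm A₁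
    (karr : ℕ → Ω → ℕ)
    (hkarr0 : ∀ ω, karr 0 ω = 0)
    (hkarrsucc : ∀ i ω, karr (i + 1) ω = sInf {k : ℕ | karr i ω < k ∧ 0 < N k ω})
    (x : ℕ → Ω → EuclideanSpace ℝ (Fin n))
    (hxinit : ∀ ω, x 0 ω = x0 ω)
    (hxarr : ∀ i ω, ∀ ℓ ≤ min (N (karr i ω) ω) (karr (i + 1) ω - karr i ω),
      x (karr i ω + ℓ) ω = (fun χ => f χ (κ χ) 0)^[ℓ] (x (karr i ω) ω))
    (hxol : ∀ i ω, ∀ k, karr i ω + N (karr i ω) ω ≤ k → k < karr (i + 1) ω →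
      x (k + 1) ω = f (x k ω) 0 0)
    -- stability condition of Theorem 2
    (hstab : p₀ * α + (1 - p₀) * ((1 / (1 - p₀ * ρ)) *
        (ρ * (1 - p₀ * α) + ((α - ρ) / (1 - p₀)) * ∑ l ∈ Finset.Icc 1 Λ, p l * (p₀ * ρ) ^ l))
      < 1) :
    ∑' k : ℕ, ∫⁻ ω, ENNReal.ofReal (φ₁ ‖x k ω‖) ∂μ < ⊤ := by
  classical
  obtain ⟨W, β, ε, hεpos, hβ0, hβ1, hWlo, hWhi, hK0, hK1⟩ :=
    stmt7_weights Λ p₀ ρ α p hρ0 hρ1 hp₀0 hp₀1 hα1 hαp hpnonneg hpsum hstab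
  set gcl : EuclideanSpace ℝ (Fin n) → EuclideanSpace ℝ (Fin n) :=
    fun χ => f χ (κ χ) 0 with hgcl_def
  set gol : EuclideanSpace ℝ (Fin n) → EuclideanSpace ℝ (Fin n) :=
    fun χ => f χ 0 0 with hgol_def
  have hgclm : Measurable gcl :=
    hfmeas.comp (measurable_id.prodMk (hκmeas.prodMk measurable_const))
  have hgolm : Measurable gol :=
    hfmeas.comp (measurable_id.prodMk (measurable_const.prodMk measurable_const))
  set B : ℕ → Ω → ℕ := stmt7B N with hB_def
  set X : ℕ → Ω → EuclideanSpace ℝ (Fin n) := stmt7X gcl gol x0 B with hX_def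
  have hB0 : ∀ ω, B 0 ω = N 0 ω := fun ω => rfl
  have hBsucc : ∀ k ω, B (k+1) ω = if 0 < N (k+1) ω then N (k+1) ω else B k ω - 1 :=
    fun k ω => rfl
  have hX0 : ∀ ω, X 0 ω = x0 ω := fun ω => rfl
  have hXsucc : ∀ k ω, X (k+1) ω = if 0 < B k ω then gcl (X k ω) else gol (X k ω) :=
    fun k ω => rfl
  -- pathwise identification on the event of infinitely many arrivals
  have hpath : ∀ ω, (∀ m', ∃ j, m' < j ∧ 0 < N j ω) → ∀ k,
      x k ω = X k ω ∧ ∃ i, karr i ω ≤ k ∧ k < karr (i+1) ω ∧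
        B k ω = N (karr i ω) ω - (k - karr i ω) := by
    intro ω hω
    have hSmem : ∀ i, karr i ω < karr (i+1) ω ∧ 0 < N (karr (i+1) ω) ω := by
      intro i
      have hne : {k' : ℕ | karr i ω < k' ∧ 0 < N k' ω}.Nonempty := by
        obtain ⟨j, hj1, hj2⟩ := hω (karr i ω)
        exact ⟨j, hj1, hj2⟩
      have hmem := Nat.sInf_mem hne
      rw [← hkarrsucc i ω] at hmem
      exact hmem
    have hSle : ∀ i k', karr i ω < k' → 0 < N k' ω → karr (i+1) ω ≤ k' := by
      intro i k' h1 h2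
      rw [hkarrsucc i ω]
      exact Nat.sInf_le ⟨h1, h2⟩
    intro k
    induction k with
    | zero =>
        refine ⟨(hxinit ω).trans (hX0 ω).symm, 0, le_of_eq (hkarr0 ω), ?_, ?_⟩
        · have h1 := (hSmem 0).1
          rw [hkarr0 ω] at h1
          exact h1
        · rw [hB0 ω, hkarr0 ω]
          omega
    | succ k ih =>
        obtain ⟨hxk, i, hik1, hik2, hBk⟩ := ih
        constructor
        · by_cases hpos : 0 < B k ω
          · have hl : k - karr i ω < N (karr i ω) ω := by omega
            have hle1 : k - karr i ω + 1 ≤ min (N (karr i ω) ω) (karr (i+1) ω - karr i ω) := by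
              refine le_min (by omega) (by omega)
            have hle0 : k - karr i ω ≤ min (N (karr i ω) ω) (karr (i+1) ω - karr i ω) := by
              omega
            have h1 := hxarr i ω _ hle0
            have h2 := hxarr i ω _ hle1
            have ha : karr i ω + (k - karr i ω) = k := by omega
            have hb : karr i ω + (k - karr i ω + 1) = k + 1 := by omega
            rw [ha] at h1
            rw [hb] at h2
            rw [hXsucc k ω, if_pos hpos, ← hxk, h2, Function.iterate_succ_apply', ← h1]
          · have hge : karr i ω + N (karr i ω) ω ≤ k := by omega
            have h3 := hxol i ω k hge hik2
            rw [hXsucc k ω, if_neg hpos, ← hxk]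
            exact h3
        · by_cases hNk : 0 < N (k+1) ω
          · have heq : karr (i+1) ω = k + 1 :=
              le_antisymm (hSle i (k+1) (by omega) hNk) (by omega)
            refine ⟨i+1, by omega, ?_, ?_⟩
            · have h4 := (hSmem (i+1)).1
              omega
            · rw [hBsucc k ω, if_pos hNk, heq]
              omega
          · have hne : karr (i+1) ω ≠ k + 1 := by
              intro hcon
              have h5 := (hSmem i).2
              rw [hcon] at h5
              omega
            refine ⟨i, by omega, by omega, ?_⟩
            rw [hBsucc k ω, if_neg hNk, hBk]
            omega
  -- almost surely there are infinitely many arrivals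
  have hAae : ∀ᵐ ω ∂μ, ∀ m', ∃ j, m' < j ∧ 0 < N j ω := by
    rw [ae_iff]
    have hsub : {ω | ¬ ∀ m', ∃ j, m' < j ∧ 0 < N j ω} ⊆
        ⋃ m', {ω | ∀ j, m' < j → N j ω = 0} := by
      intro ω hω
      simp only [Set.mem_setOf_eq, not_forall, not_exists] at hω
      obtain ⟨m', hm'⟩ := hω
      refine Set.mem_iUnion.2 ⟨m', fun j hj => ?_⟩
      have := hm' j
      omega
    refine measure_mono_null hsub (measure_iUnion_null fun m' => ?_)
    have hbound : ∀ r : ℕ, μ {ω | ∀ j, m' < j → N j ω = 0} ≤ (ENNReal.ofReal p₀) ^ r := by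
      intro r
      have hsub2 : {ω | ∀ j, m' < j → N j ω = 0} ⊆
          ⋂ j ∈ Finset.Icc (m'+1) (m'+r), (N j)⁻¹' {0} := by
        intro ω hω
        simp only [Set.mem_iInter, Set.mem_preimage, Set.mem_singleton_iff]
        intro j hj
        rw [Finset.mem_Icc] at hj
        exact hω j (by omega)
      refine le_trans (measure_mono hsub2) ?_
      have heq := hNiid.meas_biInter (S := Finset.Icc (m'+1) (m'+r))
        (s := fun j => (N j)⁻¹' {0})
        (fun j hj => ⟨{0}, trivial, rfl⟩)
      rw [heq]
      have : ∀ j ∈ Finset.Icc (m'+1) (m'+r), μ ((N j)⁻¹' {0}) = ENNReal.ofReal p₀ := by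
        intro j hj
        rw [Finset.mem_Icc] at hj
        have := hNdist0 j (by omega)
        rw [← this]
        rfl
      rw [Finset.prod_congr rfl this, Finset.prod_const, Nat.card_Icc]
      simp
    have htend : Filter.Tendsto (fun r : ℕ => (ENNReal.ofReal p₀) ^ r)
        Filter.atTop (nhds 0) :=
      ENNReal.tendsto_pow_atTop_nhds_zero_of_lt_one
        (by
          rw [← ENNReal.ofReal_one]
          exact ENNReal.ofReal_lt_ofReal_iff_of_nonneg hp₀0 |>.2 hp₀1)
    exact le_antisymm (ge_of_tendsto' htend hbound |>.trans (le_refl 0)) zero_le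
  -- measurability infrastructure
  have hMle : ∀ k : ℕ, (MeasurableSpace.comap x0 inferInstance ⊔
      ⨆ i ∈ Set.Iic k, MeasurableSpace.comap (N i) inferInstance) ≤
      (inferInstance : MeasurableSpace Ω) := by
    intro k
    exact sup_le hx0meas.comap_le (iSup₂_le fun i hi => (hNmeas i).comap_le)
  have hmeasB : ∀ k, Measurable (B k) :=
    fun k => (stmt7_measB N x0 k).mono (hMle k) le_rfl
  have hmeasX : ∀ k, Measurable (X k) :=
    fun k => ((stmt7_measX N x0 gcl gol hgclm hgolm k).1).mono (hMle k) le_rfl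
  -- the Lyapunov-type quantity
  obtain ⟨e, he_app⟩ : ∃ e : ℕ → ℝ≥0∞,
      ∀ k, e k = ∫⁻ ω, ENNReal.ofReal (W (B k ω) * V (X k ω)) ∂μ :=
    ⟨fun k => ∫⁻ ω, ENNReal.ofReal (W (B k ω) * V (X k ω)) ∂μ, fun k => rfl⟩
  -- one-step contraction in expectation
  have hstep : ∀ k, e (k+1) ≤ ENNReal.ofReal β * e k := by
    intro k
    set G : ℕ → Ω → ℝ≥0∞ := fun j ω =>
      ENNReal.ofReal (W (if 0 < j then j else B k ω - 1) * V (X (k+1) ω)) with hG_def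
    set I : ℕ → Ω → ℝ≥0∞ := fun j ω => if N (k+1) ω = j then 1 else 0 with hI_def
    have hGmeas : ∀ j, Measurable[MeasurableSpace.comap x0 inferInstance ⊔
        ⨆ i ∈ Set.Iic k, MeasurableSpace.comap (N i) inferInstance] (G j) := by
      intro j
      apply ENNReal.measurable_ofReal.comp
      apply Measurable.mul
      · apply (measurable_from_top (f := W)).comp
        by_cases hj : 0 < j
        · simp only [if_pos hj]
          exact measurable_const
        · simp only [if_neg hj]
          exact (measurable_from_top (f := fun b : ℕ => b - 1)).comp (stmt7_measB N x0 k)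
      · exact hVmeas.comp (stmt7_measX N x0 gcl gol hgclm hgolm k).2
    have hImeas : ∀ j, Measurable[MeasurableSpace.comap (N (k+1)) inferInstance] (I j) := by
      intro j
      exact (measurable_from_top (f := fun n : ℕ => if n = j then (1:ℝ≥0∞) else 0)).comp
        (Measurable.of_comap_le le_rfl)
    have hGmeas' : ∀ j, Measurable (G j) := fun j => (hGmeas j).mono (hMle k) le_rfl
    have hImeas' : ∀ j, Measurable (I j) :=
      fun j => (hImeas j).mono (hNmeas (k+1)).comap_le le_rfl
    -- pointwise decomposition over the value of N (k+1)
    have hdecomp : ∀ ω, ENNReal.ofReal (W (B (k+1) ω) * V (X (k+1) ω)) =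
        ∑ j ∈ Finset.range (Λ+1), G j ω * I j ω := by
      intro ω
      have hj0 : N (k+1) ω ≤ Λ := hNval (k+1) ω (by omega)
      rw [Finset.sum_eq_single (N (k+1) ω)]
      · simp only [hG_def, hI_def, if_pos rfl, mul_one, hBsucc k ω]
      · intro j hj hne
        simp only [hI_def, if_neg (fun hc : N (k+1) ω = j => hne hc.symm), mul_zero]
      · intro hnotmem
        exact absurd (Finset.mem_range.2 (by omega)) hnotmem
    have e1 : e (k+1) = ∑ j ∈ Finset.range (Λ+1), ∫⁻ ω, G j ω * I j ω ∂μ := by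
      rw [he_app (k+1), ← lintegral_finset_sum (f := fun j ω => G j ω * I j ω) _ (fun j hj => (hGmeas' j).mul (hImeas' j))]
      exact lintegral_congr fun ω => hdecomp ω
    -- independence factorization
    have e2 : ∀ j, ∫⁻ ω, G j ω * I j ω ∂μ = (∫⁻ ω, G j ω ∂μ) * μ {ω | N (k+1) ω = j} := by
      intro j
      have hfact := lintegral_mul_eq_lintegral_mul_lintegral_of_independent_measurableSpace
        (hMle k) (hNmeas (k+1)).comap_le
        (stmt7_indep_sup μ N hNmeas hNiid x0 hx0meas hx0indep k)
        (hGmeas j) (hImeas j)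
      rw [hfact]
      congr 1
      have hIind : (fun ω => I j ω) = Set.indicator ((N (k+1)) ⁻¹' {j}) (fun _ => (1:ℝ≥0∞)) := by
        funext ω
        simp only [hI_def, Set.indicator, Set.mem_preimage, Set.mem_singleton_iff]
      rw [hIind, lintegral_indicator ((hNmeas (k+1)) (measurableSet_singleton j):)]
      simp only [lintegral_const, MeasurableSet.univ, Measure.restrict_apply, Set.univ_inter,
        one_mul]
      rfl
    -- the distribution of N (k+1)
    have e3 : ∀ j ∈ Finset.range (Λ+1), μ {ω | N (k+1) ω = j}
        = ENNReal.ofReal (if j = 0 then p₀ else p j) := by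
      intro j hj
      rw [Finset.mem_range] at hj
      by_cases hj0 : j = 0
      · subst hj0
        simp only [if_pos rfl]
        exact hNdist0 (k+1) (by omega)
      · simp only [if_neg hj0]
        exact hNdist (k+1) (by omega) j (Finset.mem_Icc.2 (by omega))
    -- the key real inequality
    have hq0 : ∀ j ∈ Finset.range (Λ+1), 0 ≤ (if j = 0 then p₀ else p j) := by
      intro j hj
      rw [Finset.mem_range] at hj
      by_cases hj0 : j = 0
      · simp [hj0, hp₀0]
      · simp only [if_neg hj0]
        exact hpnonneg j (Finset.mem_Icc.2 (by omega))
    have hrange : Finset.range (Λ+1) = insert 0 (Finset.Icc 1 Λ) := by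
      ext j
      simp only [Finset.mem_range, Finset.mem_insert, Finset.mem_Icc]
      omega
    have hkeyR : ∀ ω, ∑ j ∈ Finset.range (Λ+1),
        (if j = 0 then p₀ else p j) * (W (if 0 < j then j else B k ω - 1) * V (X (k+1) ω))
        ≤ β * (W (B k ω) * V (X k ω)) := by
      intro ω
      set b : ℕ := B k ω with hb_def
      set v : ℝ := V (X k ω) with hv_def
      set v' : ℝ := V (X (k+1) ω) with hv'_def
      have hv0 : 0 ≤ v := hVnonneg _
      have hv'0 : 0 ≤ v' := hVnonneg _
      have hsum_eq : ∑ j ∈ Finset.range (Λ+1),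
          (if j = 0 then p₀ else p j) * (W (if 0 < j then j else b - 1) * v')
          = (p₀ * W (b-1) + ∑ l ∈ Finset.Icc 1 Λ, p l * W l) * v' := by
        rw [hrange, Finset.sum_insert (by simp)]
        have hterms : ∀ l ∈ Finset.Icc 1 Λ,
            (if l = 0 then p₀ else p l) * (W (if 0 < l then l else b - 1) * v')
            = (p l * W l) * v' := by
          intro l hl
          rw [Finset.mem_Icc] at hl
          rw [if_neg (by omega), if_pos (by omega)]
          ring
        rw [Finset.sum_congr rfl hterms, if_pos rfl, if_neg (lt_irrefl 0), ← Finset.sum_mul]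
        ring
      rw [hsum_eq]
      have hQ0 : 0 ≤ p₀ * W (b-1) + ∑ l ∈ Finset.Icc 1 Λ, p l * W l := by
        have h1 : 0 ≤ p₀ * W (b-1) := mul_nonneg hp₀0 (le_trans hεpos.le (hWlo _))
        have h2 : 0 ≤ ∑ l ∈ Finset.Icc 1 Λ, p l * W l :=
          Finset.sum_nonneg fun l hl => mul_nonneg (hpnonneg l hl)
            (le_trans hεpos.le (hWlo l))
        linarith
      rcases Nat.eq_zero_or_pos b with hb0 | hbpos
      · -- open-loop step
        have hv' : v' ≤ α * v := by
          rw [hv'_def, hXsucc k ω, if_neg (by omega : ¬ 0 < B k ω)]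
          exact hgrow (X k ω)
        calc (p₀ * W (b-1) + ∑ l ∈ Finset.Icc 1 Λ, p l * W l) * v'
            ≤ (p₀ * W (b-1) + ∑ l ∈ Finset.Icc 1 Λ, p l * W l) * (α * v) :=
              mul_le_mul_of_nonneg_left hv' hQ0
          _ = (α * (p₀ * W (b-1) + ∑ l ∈ Finset.Icc 1 Λ, p l * W l)) * v := by ring
          _ ≤ (β * W b) * v := by
              apply mul_le_mul_of_nonneg_right _ hv0
              rw [hb0]
              exact hK0
          _ = β * (W b * v) := by ring
      · -- closed-loop step
        obtain ⟨c, hc⟩ : ∃ c, b = c + 1 := ⟨b - 1, by omega⟩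
        have hv' : v' ≤ ρ * v := by
          rw [hv'_def, hXsucc k ω, if_pos (by omega : 0 < B k ω)]
          exact hcontract (X k ω)
        calc (p₀ * W (b-1) + ∑ l ∈ Finset.Icc 1 Λ, p l * W l) * v'
            ≤ (p₀ * W (b-1) + ∑ l ∈ Finset.Icc 1 Λ, p l * W l) * (ρ * v) :=
              mul_le_mul_of_nonneg_left hv' hQ0
          _ = (ρ * (p₀ * W (b-1) + ∑ l ∈ Finset.Icc 1 Λ, p l * W l)) * v := by ring
          _ ≤ (β * W b) * v := by
              apply mul_le_mul_of_nonneg_right _ hv0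
              rw [hc]
              have := hK1 c
              simpa using this
          _ = β * (W b * v) := by ring
    -- assemble
    calc e (k+1) = ∑ j ∈ Finset.range (Λ+1), ∫⁻ ω, G j ω * I j ω ∂μ := e1
      _ = ∑ j ∈ Finset.range (Λ+1),
            ENNReal.ofReal (if j = 0 then p₀ else p j) * ∫⁻ ω, G j ω ∂μ := by
          apply Finset.sum_congr rfl
          intro j hj
          rw [e2 j, e3 j hj, mul_comm]
      _ = ∫⁻ ω, ∑ j ∈ Finset.range (Λ+1),
            ENNReal.ofReal (if j = 0 then p₀ else p j) * G j ω ∂μ := by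
          rw [lintegral_finset_sum (f := fun j ω => ENNReal.ofReal (if j = 0 then p₀ else p j) * G j ω) _ (fun j hj => (measurable_const.mul (hGmeas' j)))]
          apply Finset.sum_congr rfl
          intro j hj
          rw [lintegral_const_mul _ (hGmeas' j)]
      _ ≤ ∫⁻ ω, ENNReal.ofReal (β * (W (B k ω) * V (X k ω))) ∂μ := by
          apply lintegral_mono
          intro ω
          dsimp only
          have h1 : ∀ j ∈ Finset.range (Λ+1),
              ENNReal.ofReal (if j = 0 then p₀ else p j) * G j ω
              = ENNReal.ofReal ((if j = 0 then p₀ else p j) *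
                  (W (if 0 < j then j else B k ω - 1) * V (X (k+1) ω))) := by
            intro j hj
            rw [hG_def]
            simp only []
            rw [← ENNReal.ofReal_mul (hq0 j hj)]
          rw [Finset.sum_congr rfl h1, ← ENNReal.ofReal_sum_of_nonneg]
          · exact ENNReal.ofReal_le_ofReal (hkeyR ω)
          · intro j hj
            exact mul_nonneg (hq0 j hj) (mul_nonneg
              (le_trans hεpos.le (hWlo _)) (hVnonneg _))
      _ = ENNReal.ofReal β * e k := by
          rw [he_app k, ← lintegral_const_mul' _ _ ENNReal.ofReal_ne_top]
          apply lintegral_congr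
          intro ω
          rw [ENNReal.ofReal_mul hβ0]
  -- initial bound
  have he0fin : e 0 < ⊤ := by
    have hb : e 0 ≤ ENNReal.ofReal (1 + ε) * ∫⁻ ω, ENNReal.ofReal (φ₂ ‖x0 ω‖) ∂μ := by
      rw [he_app 0, ← lintegral_const_mul' _ _ ENNReal.ofReal_ne_top]
      apply lintegral_mono
      intro ω
      dsimp only
      rw [← ENNReal.ofReal_mul (by linarith : (0:ℝ) ≤ 1 + ε)]
      apply ENNReal.ofReal_le_ofReal
      have h1 : V (X 0 ω) ≤ φ₂ ‖x0 ω‖ := by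
        rw [hX0 ω]
        exact (hsandwich (x0 ω)).2
      have h2 : W (B 0 ω) ≤ 1 + ε := hWhi _
      have h3 : 0 ≤ V (X 0 ω) := hVnonneg _
      nlinarith [le_trans hεpos.le (hWlo (B 0 ω))]
    exact lt_of_le_of_lt hb (ENNReal.mul_lt_top ENNReal.ofReal_lt_top hx0int)
  -- geometric decay
  have hek : ∀ k, e k ≤ ENNReal.ofReal β ^ k * e 0 := by
    intro k
    induction k with
    | zero => simp
    | succ k ih =>
        calc e (k+1) ≤ ENNReal.ofReal β * e k := hstep k
          _ ≤ ENNReal.ofReal β * (ENNReal.ofReal β ^ k * e 0) :=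
              mul_le_mul_right ih _
          _ = ENNReal.ofReal β ^ (k+1) * e 0 := by ring
  -- a.e. equality of trajectories
  have hxX : ∀ k, ∫⁻ ω, ENNReal.ofReal (φ₁ ‖x k ω‖) ∂μ
      = ∫⁻ ω, ENNReal.ofReal (φ₁ ‖X k ω‖) ∂μ := by
    intro k
    apply lintegral_congr_ae
    filter_upwards [hAae] with ω hω
    rw [(hpath ω hω k).1]
  -- per-step bound
  have hterm : ∀ k, ∫⁻ ω, ENNReal.ofReal (φ₁ ‖x k ω‖) ∂μ
      ≤ (ENNReal.ofReal ε⁻¹ * e 0) * ENNReal.ofReal β ^ k := by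
    intro k
    rw [hxX k]
    have h1 : ∫⁻ ω, ENNReal.ofReal (φ₁ ‖X k ω‖) ∂μ ≤ ENNReal.ofReal ε⁻¹ * e k := by
      rw [he_app k, ← lintegral_const_mul' _ _ ENNReal.ofReal_ne_top]
      apply lintegral_mono
      intro ω
      dsimp only
      rw [← ENNReal.ofReal_mul (by positivity : (0:ℝ) ≤ ε⁻¹)]
      apply ENNReal.ofReal_le_ofReal
      have h2 : φ₁ ‖X k ω‖ ≤ V (X k ω) := (hsandwich (X k ω)).1
      have h3 : ε * V (X k ω) ≤ W (B k ω) * V (X k ω) :=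
        mul_le_mul_of_nonneg_right (hWlo _) (hVnonneg _)
      have h4 : V (X k ω) = ε⁻¹ * (ε * V (X k ω)) := by
        field_simp
      calc φ₁ ‖X k ω‖ ≤ V (X k ω) := h2
        _ = ε⁻¹ * (ε * V (X k ω)) := h4
        _ ≤ ε⁻¹ * (W (B k ω) * V (X k ω)) :=
            mul_le_mul_of_nonneg_left h3 (by positivity)
    calc ∫⁻ ω, ENNReal.ofReal (φ₁ ‖X k ω‖) ∂μ ≤ ENNReal.ofReal ε⁻¹ * e k := h1
      _ ≤ ENNReal.ofReal ε⁻¹ * (ENNReal.ofReal β ^ k * e 0) :=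
          mul_le_mul_right (hek k) _
      _ = (ENNReal.ofReal ε⁻¹ * e 0) * ENNReal.ofReal β ^ k := by ring
  -- sum up
  have hβlt1 : ENNReal.ofReal β < 1 := by
    rw [← ENNReal.ofReal_one]
    exact (ENNReal.ofReal_lt_ofReal_iff_of_nonneg hβ0).2 hβ1
  calc ∑' k : ℕ, ∫⁻ ω, ENNReal.ofReal (φ₁ ‖x k ω‖) ∂μ
      ≤ ∑' k : ℕ, (ENNReal.ofReal ε⁻¹ * e 0) * ENNReal.ofReal β ^ k :=
        ENNReal.tsum_le_tsum hterm
    _ = (ENNReal.ofReal ε⁻¹ * e 0) * ∑' k : ℕ, ENNReal.ofReal β ^ k :=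
        ENNReal.tsum_mul_left
    _ = (ENNReal.ofReal ε⁻¹ * e 0) * (1 - ENNReal.ofReal β)⁻¹ := by
        rw [ENNReal.tsum_geometric]
    _ < ⊤ := by
        apply ENNReal.mul_lt_top
        · exact ENNReal.mul_lt_top ENNReal.ofReal_lt_top he0fin
        · rw [lt_top_iff_ne_top]
          apply ENNReal.inv_ne_top.2
          have hpos : (0:ℝ≥0∞) < 1 - ENNReal.ofReal β := tsub_pos_iff_lt.2 hβlt1
          exact hpos.ne'
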